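/- arXiv:2205.14616 — 14 statements merged into one kernel-verified Lean document; each statement's English description precedes it below -/
import Mathlib

section
/- Let X be a set with a symmetric binary relation ⊤ on X. Extend ⊤ to the free K-vector space K(X) by declaring two finitely supported linear combinations (with nonzero coefficients) independent iff every basis element appearing in one is ⊤-related to every basis element appearing in the other. Then for every subset U of K(X), the polar set U^⊤ = {x : ∀ u ∈ U, u ⊤ x} is a linear subspace of K(X). -/
/-- The extension of a relation `r` on `X` to the free `K`-vector space `X →₀ K`:
two finitely supported linear combinations (with nonzero coefficients, i.e. on their supports)
are related iff every basis element appearing in one is `r`-related to every basis element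
appearing in the other. -/
def extRel {X K : Type*} [Field K] (r : X → X → Prop) (a b : X →₀ K) : Prop :=
  ∀ x ∈ a.support, ∀ y ∈ b.support, r x y

/-- The linear span `K(X)` of a locality set `(X, r)` is a locality vector space:
every polar set is a linear subspace. -/
theorem stmt0 {X K : Type*} [Field K] (r : X → X → Prop)
    (hsymm : ∀ x y, r x y → r y x) (U : Set (X →₀ K)) :
    ∃ p : Submodule K (X →₀ K),
      (p : Set (X →₀ K)) = {b : X →₀ K | ∀ u ∈ U, extRel r u b} := by
  classical
  exact ⟨{ carrier := {b : X →₀ K | ∀ u ∈ U, extRel r u b}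
           zero_mem' := by
             intro u _ x _ y hy
             simp at hy
           add_mem' := by
             intro a b ha hb u hu x hx y hy
             rcases Finset.mem_union.mp (Finsupp.support_add hy) with h | h
             · exact ha u hu x hx y h
             · exact hb u hu x hx y h
           smul_mem' := by
             intro c b hb u hu x hx y hy
             exact hb u hu x hx y (Finsupp.support_smul hy) }, rfl⟩
end

section
/- Let (E,⊤_E) be a pre-locality vector space with locality closure ⊤_E^ℓ (the smallest locality relation containing ⊤_E). Then for every locality vector space (F,⊤_F) and every linear map f : E → F with (f×f)(⊤_E) ⊆ ⊤_F, one also has (f×f)(⊤_E^ℓ) ⊆ ⊤_F. -/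
/-- A locality relation on the `K`-vector space `E`: a symmetric relation all of whose
polar sets are linear subspaces. -/
def IsLocalityRel (K : Type*) {E : Type*} [Field K] [AddCommGroup E] [Module K E]
    (r : E → E → Prop) : Prop :=
  (∀ x y, r x y → r y x) ∧
  ∀ U : Set E, ∃ p : Submodule K E, (p : Set E) = {x | ∀ u ∈ U, r u x}

/-- The locality closure of a relation `r`: the intersection of all locality relations
containing `r`. -/
def localityClosure (K : Type*) {E : Type*} [Field K] [AddCommGroup E] [Module K E]
    (r : E → E → Prop) (x y : E) : Prop :=
  ∀ r' : E → E → Prop, IsLocalityRel K r' → (∀ a b, r a b → r' a b) → r' x y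

/-- If `(E, rE)` is a pre-locality vector space, `(F, rF)` a locality vector space, and
`f : E → F` a linear map with `(f × f)(rE) ⊆ rF`, then also
`(f × f)(rE^ℓ) ⊆ rF` where `rE^ℓ` is the locality closure of `rE`. -/
theorem stmt2 {K E F : Type*} [Field K] [AddCommGroup E] [Module K E]
    [AddCommGroup F] [Module K F]
    (rE : E → E → Prop) (hsymmE : ∀ x y, rE x y → rE y x) (h0E : rE 0 0)
    (rF : F → F → Prop) (hF : IsLocalityRel K rF) (h0F : rF 0 0)
    (f : E →ₗ[K] F) (hf : ∀ x y, rE x y → rF (f x) (f y)) :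
    ∀ x y, localityClosure K rE x y → rF (f x) (f y) := by
  intro x y h
  exact h (fun a b => rF (f a) (f b))
    ⟨fun a b hab => hF.1 _ _ hab,
     fun U => by
      obtain ⟨p, hp⟩ := hF.2 (f '' U)
      refine ⟨p.comap f, ?_⟩
      ext z
      constructor
      · intro hz u hu
        have : f z ∈ (p : Set F) := hz
        rw [hp] at this
        exact this (f u) ⟨u, hu, rfl⟩
      · intro hz
        show f z ∈ (p : Set F)
        rw [hp]
        rintro v ⟨u, hu, rfl⟩; exact hz u hu⟩
    hf
end

section
/- On the one-dimensional space K with the relation ⊤ = {(0,0),(1,1)}, the only linear maps f : K → K with (f×f)(⊤) ⊆ ⊤ are f = 0 and f = id. In contrast, the locality closure ⊤^ℓ of ⊤ equals K×K, and every scalar multiple of the identity is a locality endomorphism of (K,⊤^ℓ). Hence the map sending a pre-locality endomorphism of (K,⊤) to the induced locality endomorphism of (K,⊤^ℓ) is not surjective. -/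
/-- The relation ⊤ = {(0,0), (1,1)} on the one-dimensional space `K`. -/
def relKK (K : Type*) [Field K] (x y : K) : Prop :=
  (x = 0 ∧ y = 0) ∨ (x = 1 ∧ y = 1)

lemma closure_full (K : Type*) [Field K] :
    ∀ x y : K, localityClosure K (relKK K) x y := by
  intro x y r' hloc hsub
  obtain ⟨hsym, hpol⟩ := hloc
  have key : ∀ a b : K, r' a 1 → r' a b := by
    intro a b hab
    obtain ⟨p, hp⟩ := hpol {a}
    have h1 : (1 : K) ∈ p := by
      rw [← SetLike.mem_coe, hp]
      intro u hu; rw [Set.mem_singleton_iff] at hu; subst hu; exact hab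
    have hb : b ∈ p := by
      have := p.smul_mem b h1
      simpa using this
    rw [← SetLike.mem_coe, hp] at hb
    exact hb a rfl
  have h11 : r' 1 1 := hsub 1 1 (Or.inr ⟨rfl, rfl⟩)
  have h1x : r' 1 x := key 1 x h11
  exact key x y (hsym 1 x h1x)

/-- On `(K, ⊤)` with `⊤ = {(0,0),(1,1)}`: the pre-locality endomorphisms are exactly `0`
and `id`; the locality closure `⊤^ℓ` is all of `K × K`; every scalar multiple of the
identity is a locality endomorphism of `(K, ⊤^ℓ)`; and the inclusion of pre-locality
endomorphisms of `(K, ⊤)` into locality endomorphisms of `(K, ⊤^ℓ)` is not surjective. -/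
theorem stmt3 (K : Type*) [Field K] [CharZero K] :
    (∀ f : K →ₗ[K] K, (∀ x y, relKK K x y → relKK K (f x) (f y)) ↔
      (f = 0 ∨ f = LinearMap.id)) ∧
    (∀ x y : K, localityClosure K (relKK K) x y) ∧
    (∀ c : K, ∀ x y : K, localityClosure K (relKK K) x y →
      localityClosure K (relKK K) (c • x) (c • y)) ∧
    ¬ (∀ g : K →ₗ[K] K,
        (∀ x y, localityClosure K (relKK K) x y →
          localityClosure K (relKK K) (g x) (g y)) →
        (∀ x y, relKK K x y → relKK K (g x) (g y))) := by
  refine ⟨?_, closure_full K, fun c x y _ => closure_full K _ _, ?_⟩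
  · intro f
    constructor
    · intro h
      have h1 := h 1 1 (Or.inr ⟨rfl, rfl⟩)
      rcases h1 with ⟨h0, _⟩ | ⟨h0, _⟩
      · left
        apply LinearMap.ext; intro x
        have : f x = x • f 1 := by rw [← map_smul]; simp
        simp [this, h0]
      · right
        apply LinearMap.ext; intro x
        have : f x = x • f 1 := by rw [← map_smul]; simp
        simp [this, h0]
    · rintro (rfl | rfl) x y h
      · exact Or.inl ⟨by simp, by simp⟩
      · simpa using h
  · intro h
    have := h ((2 : K) • LinearMap.id) (fun x y _ => closure_full K _ _) 1 1
      (Or.inr ⟨rfl, rfl⟩)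
    simp only [LinearMap.smul_apply, LinearMap.id_apply, smul_eq_mul, mul_one] at this
    rcases this with ⟨h0, _⟩ | ⟨h0, _⟩
    · exact two_ne_zero h0
    · exact (by norm_num : (2:K) ≠ 1) h0
end

section
/- Let (V,⊤) be the locality vector space V = ℝ² with ⊤ the orthogonality relation. Then (⟨e₁⟩ ⊗_⊤ ℝ²) ⊕ (⟨e₂⟩ ⊗_⊤ ℝ²) is a proper subspace of (⟨e₁⟩ ⊕ ⟨e₂⟩) ⊗_⊤ ℝ² = ℝ² ⊗_⊤ ℝ²: the element (e₁+e₂) ⊗ (e₁−e₂) lies in ℝ² ⊗_⊤ ℝ² but not in ⟨e₁⊗e₂⟩ ⊕ ⟨e₂⊗e₁⟩. -/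
open scoped TensorProduct RealInnerProductSpace

noncomputable section

/-- The locality tensor product (with respect to orthogonality) of two subspaces of `ℝ²`:
the span in `ℝ² ⊗ ℝ²` of the pure tensors of orthogonal pairs. -/
def locTensorR2 (V W : Submodule ℝ (EuclideanSpace ℝ (Fin 2))) :
    Submodule ℝ (EuclideanSpace ℝ (Fin 2) ⊗[ℝ] EuclideanSpace ℝ (Fin 2)) :=
  Submodule.span ℝ {z | ∃ v ∈ V, ∃ w ∈ W, (inner ℝ v w : ℝ) = 0 ∧ z = v ⊗ₜ[ℝ] w}

def e₁ : EuclideanSpace ℝ (Fin 2) := EuclideanSpace.single 0 1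

def e₂ : EuclideanSpace ℝ (Fin 2) := EuclideanSpace.single 1 1

def proj0 : EuclideanSpace ℝ (Fin 2) →ₗ[ℝ] ℝ where
  toFun v := v 0
  map_add' _ _ := rfl
  map_smul' _ _ := rfl

def fLin : EuclideanSpace ℝ (Fin 2) ⊗[ℝ] EuclideanSpace ℝ (Fin 2) →ₗ[ℝ] ℝ :=
  TensorProduct.lift ((LinearMap.mul ℝ ℝ).compl₁₂ proj0 proj0)

@[simp] lemma fLin_tmul (v w : EuclideanSpace ℝ (Fin 2)) :
    fLin (v ⊗ₜ[ℝ] w) = v 0 * w 0 := rfl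

lemma e₁_zero : e₁ 0 = 1 := by simp [e₁]
lemma e₁_one : e₁ 1 = 0 := by simp [e₁]
lemma e₂_zero : e₂ 0 = 0 := by simp [e₂]
lemma e₂_one : e₂ 1 = 1 := by simp [e₂]

lemma inner_eq (v w : EuclideanSpace ℝ (Fin 2)) :
    (inner ℝ v w : ℝ) = v 0 * w 0 + v 1 * w 1 := by
  simp [PiLp.inner_apply, Fin.sum_univ_two, mul_comm]

lemma sup_le_ker :
    locTensorR2 (Submodule.span ℝ {e₁}) ⊤ ⊔ locTensorR2 (Submodule.span ℝ {e₂}) ⊤ ≤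
      LinearMap.ker fLin := by
  apply sup_le <;> rw [locTensorR2, Submodule.span_le] <;>
    rintro z ⟨v, hv, w, -, hvw, rfl⟩ <;>
    rw [Submodule.mem_span_singleton] at hv <;> obtain ⟨c, rfl⟩ := hv <;>
    simp only [SetLike.mem_coe, LinearMap.mem_ker, fLin_tmul, PiLp.smul_apply, smul_eq_mul]
  · rw [inner_eq] at hvw
    simp only [PiLp.smul_apply, smul_eq_mul, e₁_zero, e₁_one, mul_one, mul_zero,
      zero_mul, add_zero] at hvw
    rw [e₁_zero, mul_one, hvw]
  · rw [e₂_zero, mul_zero, zero_mul]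

lemma fLin_elem : fLin ((e₁ + e₂) ⊗ₜ[ℝ] (e₁ - e₂)) = 1 := by
  simp [fLin_tmul, e₁_zero, e₂_zero]

/-- In `ℝ²` with the orthogonality locality, `(⟨e₁⟩ ⊗_⊤ ℝ²) ⊕ (⟨e₂⟩ ⊗_⊤ ℝ²)` is a proper
subspace of `(⟨e₁⟩ ⊕ ⟨e₂⟩) ⊗_⊤ ℝ² = ℝ² ⊗_⊤ ℝ²`: the element `(e₁+e₂) ⊗ (e₁−e₂)` lies in
`ℝ² ⊗_⊤ ℝ²` but not in the former. -/
theorem stmt4 :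
    (e₁ + e₂) ⊗ₜ[ℝ] (e₁ - e₂) ∈ locTensorR2 ⊤ ⊤ ∧
    (e₁ + e₂) ⊗ₜ[ℝ] (e₁ - e₂) ∉
      locTensorR2 (Submodule.span ℝ {e₁}) ⊤ ⊔ locTensorR2 (Submodule.span ℝ {e₂}) ⊤ ∧
    locTensorR2 (Submodule.span ℝ {e₁}) ⊤ ⊔ locTensorR2 (Submodule.span ℝ {e₂}) ⊤ <
      locTensorR2 ⊤ ⊤ := by
  have hmem : (e₁ + e₂) ⊗ₜ[ℝ] (e₁ - e₂) ∈ locTensorR2 ⊤ ⊤ := by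
    apply Submodule.subset_span
    refine ⟨e₁ + e₂, trivial, e₁ - e₂, trivial, ?_, rfl⟩
    rw [inner_eq]
    simp [e₁_zero, e₁_one, e₂_zero, e₂_one]
  have hnot : (e₁ + e₂) ⊗ₜ[ℝ] (e₁ - e₂) ∉
      locTensorR2 (Submodule.span ℝ {e₁}) ⊤ ⊔ locTensorR2 (Submodule.span ℝ {e₂}) ⊤ := by
    intro h
    have := sup_le_ker h
    rw [LinearMap.mem_ker, fLin_elem] at this
    exact one_ne_zero this
  refine ⟨hmem, hnot, lt_of_le_of_ne ?_ fun h => hnot (h ▸ hmem)⟩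
  apply sup_le <;> rw [locTensorR2, Submodule.span_le] <;>
    rintro z ⟨v, -, w, -, hvw, rfl⟩ <;>
    exact Submodule.subset_span ⟨v, trivial, w, trivial, hvw, rfl⟩

end
end

section
/- Let V and W be linear subspaces of a pre-locality vector space (E,⊤), and let V₁, V₂ be subspaces of V with V₁ ⊕ V₂ = V. If both projections π_i : V → V_i (along the complementary factor) are locally independent of the identity on W, i.e., (v,w) ∈ ⊤ with v∈V, w∈W implies (π_i(v),w) ∈ ⊤, then (V₁ ⊗_⊤ W) ⊕ (V₂ ⊗_⊤ W) = V ⊗_⊤ W as subspaces of V ⊗ W. -/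
open scoped TensorProduct

/-- The locality tensor product of two subspaces `V, W` of a pre-locality vector space
`(E, r)`: the subspace of `E ⊗ E` spanned by the pure tensors `v ⊗ w` with `v ∈ V`,
`w ∈ W` and `r v w`. -/
def locTensor (K : Type*) {E : Type*} [Field K] [AddCommGroup E] [Module K E]
    (r : E → E → Prop) (V W : Submodule K E) : Submodule K (E ⊗[K] E) :=
  Submodule.span K {z : E ⊗[K] E | ∃ v ∈ V, ∃ w ∈ W, r v w ∧ z = v ⊗ₜ[K] w}

/-- Distributivity of the locality tensor product over a direct sum `V = V₁ ⊕ V₂` whose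
projections are locally independent of the identity of `W`. -/
theorem stmt5 {K E : Type*} [Field K] [AddCommGroup E] [Module K E]
    (r : E → E → Prop) (hsymm : ∀ x y, r x y → r y x) (h0 : r 0 0)
    (V W V₁ V₂ : Submodule K E) (hsup : V₁ ⊔ V₂ = V) (hdisj : V₁ ⊓ V₂ = ⊥)
    (π₁ π₂ : E →ₗ[K] E)
    (hπ₁ : ∀ v ∈ V, π₁ v ∈ V₁) (hπ₂ : ∀ v ∈ V, π₂ v ∈ V₂)
    (hsum : ∀ v ∈ V, π₁ v + π₂ v = v)
    (hloc₁ : ∀ v ∈ V, ∀ w ∈ W, r v w → r (π₁ v) w)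
    (hloc₂ : ∀ v ∈ V, ∀ w ∈ W, r v w → r (π₂ v) w) :
    locTensor K r V₁ W ⊔ locTensor K r V₂ W = locTensor K r V W := by
  have h₁ : V₁ ≤ V := hsup ▸ le_sup_left
  have h₂ : V₂ ≤ V := hsup ▸ le_sup_right
  apply le_antisymm
  · apply sup_le <;> apply Submodule.span_mono
    · rintro z ⟨v, hv, w, hw, hr, rfl⟩
      exact ⟨v, h₁ hv, w, hw, hr, rfl⟩
    · rintro z ⟨v, hv, w, hw, hr, rfl⟩
      exact ⟨v, h₂ hv, w, hw, hr, rfl⟩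
  · rw [locTensor, Submodule.span_le]
    rintro z ⟨v, hv, w, hw, hr, rfl⟩
    have : v ⊗ₜ[K] w = π₁ v ⊗ₜ[K] w + π₂ v ⊗ₜ[K] w := by
      rw [← TensorProduct.add_tmul, hsum v hv]
    rw [this]
    exact Submodule.add_mem _
      (Submodule.mem_sup_left (Submodule.subset_span ⟨π₁ v, hπ₁ v hv, w, hw, hloc₁ v hv w hw hr, rfl⟩))
      (Submodule.mem_sup_right (Submodule.subset_span ⟨π₂ v, hπ₂ v hv, w, hw, hloc₂ v hv w hw hr, rfl⟩))
end

section
/- Let (V,⊤) be a locality vector space, W ⊆ V a linear subspace, and π : V → V/W the quotient map. Equip V/W with the quotient relation: [u] ⊤̄ [v] iff there exist u' ∈ [u], v' ∈ [v] with u' ⊤ v'. Then (V/W, ⊤̄) is a locality vector space if and only if for every u ∈ V the set H_u = ⋃_{u'∈[u]} π({x : x ⊤ u'}) is closed under addition in V/W (equivalently, is a commutative group, equivalently a subgroup of (V/W,+)). -/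
/-- The quotient locality relation on `V ⧸ W` induced by a relation `r` on `V`:
two classes are related iff they admit `r`-related representatives. -/
def qRel {K V : Type*} [Field K] [AddCommGroup V] [Module K V]
    (r : V → V → Prop) (W : Submodule K V) (a b : V ⧸ W) : Prop :=
  ∃ u v : V, (Submodule.Quotient.mk u : V ⧸ W) = a ∧
    (Submodule.Quotient.mk v : V ⧸ W) = b ∧ r u v

lemma r_smul {K V : Type*} [Field K] [AddCommGroup V] [Module K V]
    {r : V → V → Prop}
    (hloc : ∀ U : Set V, ∃ p : Submodule K V, (p : Set V) = {x | ∀ u ∈ U, r u x})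
    (u x : V) (hx : r u x) (c : K) : r u (c • x) := by
  obtain ⟨p, hp⟩ := hloc {u}
  have hmem : ∀ y : V, y ∈ p ↔ r u y := by
    intro y
    constructor
    · intro hy
      have : y ∈ (p : Set V) := hy
      rw [hp] at this
      exact this u rfl
    · intro hy
      have : y ∈ {x | ∀ u' ∈ ({u} : Set V), r u' x} := by
        intro u' hu'; rcases hu' with rfl; exact hy
      rw [← hp] at this
      exact this
  exact (hmem _).1 (p.smul_mem c ((hmem _).2 hx))

lemma r_zero {K V : Type*} [Field K] [AddCommGroup V] [Module K V]
    {r : V → V → Prop}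
    (hloc : ∀ U : Set V, ∃ p : Submodule K V, (p : Set V) = {x | ∀ u ∈ U, r u x})
    (u : V) : r u 0 := by
  obtain ⟨p, hp⟩ := hloc {u}
  have : (0 : V) ∈ (p : Set V) := p.zero_mem
  rw [hp] at this
  exact this u rfl

/-- For a locality vector space `(V, r)` and a subspace `W`, the quotient `(V ⧸ W, r̄)`
is a locality vector space (all polar sets are subspaces) if and only if for every
`u ∈ V` the set `H_u = ⋃_{u' ∈ [u]} π({x | x r u'})` is closed under addition
(equivalently, is a commutative (sub)group of `(V ⧸ W, +)`). -/
theorem stmt7 {K V : Type*} [Field K] [AddCommGroup V] [Module K V]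
    (r : V → V → Prop) (hsymm : ∀ x y, r x y → r y x) (h0 : r 0 0)
    (hloc : ∀ U : Set V, ∃ p : Submodule K V, (p : Set V) = {x | ∀ u ∈ U, r u x})
    (W : Submodule K V) :
    (∀ U : Set (V ⧸ W), ∃ p : Submodule K (V ⧸ W),
        (p : Set (V ⧸ W)) = {a | ∀ u ∈ U, qRel r W u a}) ↔
    (∀ u : V, ∀ a b : V ⧸ W,
      a ∈ {c : V ⧸ W | ∃ u' x : V,
        (Submodule.Quotient.mk u' : V ⧸ W) = Submodule.Quotient.mk u ∧ r u' x ∧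
        (Submodule.Quotient.mk x : V ⧸ W) = c} →
      b ∈ {c : V ⧸ W | ∃ u' x : V,
        (Submodule.Quotient.mk u' : V ⧸ W) = Submodule.Quotient.mk u ∧ r u' x ∧
        (Submodule.Quotient.mk x : V ⧸ W) = c} →
      a + b ∈ {c : V ⧸ W | ∃ u' x : V,
        (Submodule.Quotient.mk u' : V ⧸ W) = Submodule.Quotient.mk u ∧ r u' x ∧
        (Submodule.Quotient.mk x : V ⧸ W) = c}) := by
  have hH : ∀ (u : V) (a : V ⧸ W),
      (∃ u' x : V, (Submodule.Quotient.mk u' : V ⧸ W) = Submodule.Quotient.mk u ∧ r u' x ∧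
        (Submodule.Quotient.mk x : V ⧸ W) = a) ↔ qRel r W (Submodule.Quotient.mk u) a := by
    intro u a
    constructor
    · rintro ⟨u', x, h1, h2, h3⟩; exact ⟨u', x, h1, h3, h2⟩
    · rintro ⟨u', x, h1, h3, h2⟩; exact ⟨u', x, h1, h2, h3⟩
  constructor
  · intro hq u a b ha hb
    obtain ⟨p, hp⟩ := hq {Submodule.Quotient.mk u}
    have hmem : ∀ c : V ⧸ W, c ∈ p ↔ qRel r W (Submodule.Quotient.mk u) c := by
      intro c
      constructor
      · intro hc
        have : c ∈ (p : Set (V ⧸ W)) := hc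
        rw [hp] at this
        exact this _ rfl
      · intro hc
        have : c ∈ {a : V ⧸ W | ∀ q ∈ ({Submodule.Quotient.mk u} : Set (V ⧸ W)), qRel r W q a} := by
          intro q hq'; rcases hq' with rfl; exact hc
        rw [← hp] at this
        exact this
    rw [Set.mem_setOf_eq, hH]
    exact (hmem _).1 (p.add_mem ((hmem _).2 ((hH u a).1 ha)) ((hmem _).2 ((hH u b).1 hb)))
  · intro hadd U
    refine ⟨{ carrier := {a | ∀ q ∈ U, qRel r W q a}
              zero_mem' := ?_
              add_mem' := ?_
              smul_mem' := ?_ }, rfl⟩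
    · intro a b ha hb q hq
      obtain ⟨w, rfl⟩ := Submodule.Quotient.mk_surjective W q
      exact (hH w _).1 (hadd w a b ((hH w a).2 (ha _ hq)) ((hH w b).2 (hb _ hq)))
    · intro q hq
      obtain ⟨w, rfl⟩ := Submodule.Quotient.mk_surjective W q
      exact ⟨w, 0, rfl, rfl, r_zero hloc w⟩
    · intro c a ha q hq
      obtain ⟨w, rfl⟩ := Submodule.Quotient.mk_surjective W q
      obtain ⟨u', x, h1, h3, h2⟩ := ha _ hq
      refine ⟨u', c • x, h1, ?_, r_smul hloc u' x h2 c⟩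
      rw [Submodule.Quotient.mk_smul, h3]
end

section
/- Let V be a real (or complex) Hilbert space with the orthogonality relation v ⊤ v' iff ⟨v,v'⟩ = 0, and let W be a closed linear subspace with W ≠ {0}. Then the quotient locality on V/W is the full relation: for every pair of classes ([v₁],[v₂]) in V/W there exist w₁, w₂ ∈ W with ⟨v₁+w₁, v₂+w₂⟩ = 0. In particular (V/W, ⊤̄) is a locality vector space. -/
open scoped RealInnerProductSpace

/-- The quotient locality relation on `V ⧸ W` induced by orthogonality on `V`. -/
def qRelOrth {V : Type*} [NormedAddCommGroup V] [InnerProductSpace ℝ V]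
    (W : Submodule ℝ V) (a b : V ⧸ W) : Prop :=
  ∃ u v : V, (Submodule.Quotient.mk u : V ⧸ W) = a ∧
    (Submodule.Quotient.mk v : V ⧸ W) = b ∧ (inner ℝ u v : ℝ) = 0

/-! Pick `w ≠ 0` in `W`. Moving `v₁` along `w` makes `⟪v₁ + a • w, w⟫ ≠ 0`; then `v₂` can be
moved along `w` into the orthogonal complement of `v₁ + a • w`. -/

section InnerProduct

variable {𝕜 E : Type*} [RCLike 𝕜] [NormedAddCommGroup E] [InnerProductSpace 𝕜 E]

theorem exists_inner_add_smul_ne_zero (x : E) {y : E} (hy : y ≠ 0) :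
    ∃ a : 𝕜, inner 𝕜 (x + a • y) y ≠ 0 := by
  by_cases hxy : inner 𝕜 x y = 0
  · exact ⟨1, by rwa [one_smul, inner_add_left, hxy, zero_add, inner_self_ne_zero]⟩
  · exact ⟨0, by rwa [zero_smul, add_zero]⟩

theorem exists_inner_add_smul_eq_zero {x y : E} (hxy : inner 𝕜 x y ≠ 0) (v : E) :
    ∃ b : 𝕜, inner 𝕜 x (v + b • y) = 0 :=
  ⟨-inner 𝕜 x v / inner 𝕜 x y, by
    rw [inner_add_right, inner_smul_right, div_mul_cancel₀ _ hxy, add_neg_cancel]⟩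

theorem Submodule.exists_inner_add_add_eq_zero {W : Submodule 𝕜 E} (hW : W ≠ ⊥) (v₁ v₂ : E) :
    ∃ w₁ ∈ W, ∃ w₂ ∈ W, inner 𝕜 (v₁ + w₁) (v₂ + w₂) = 0 := by
  obtain ⟨w, hwW, hw⟩ := W.exists_mem_ne_zero_of_ne_bot hW
  obtain ⟨a, ha⟩ := exists_inner_add_smul_ne_zero (𝕜 := 𝕜) v₁ hw
  obtain ⟨b, hb⟩ := exists_inner_add_smul_eq_zero ha v₂
  exact ⟨a • w, W.smul_mem a hwW, b • w, W.smul_mem b hwW, hb⟩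

end InnerProduct

theorem qRelOrth_of_ne_bot {V : Type*} [NormedAddCommGroup V] [InnerProductSpace ℝ V]
    {W : Submodule ℝ V} (hW : W ≠ ⊥) (a b : V ⧸ W) : qRelOrth W a b := by
  obtain ⟨v₁, rfl⟩ := W.mkQ_surjective a
  obtain ⟨v₂, rfl⟩ := W.mkQ_surjective b
  obtain ⟨w₁, hw₁, w₂, hw₂, h⟩ := W.exists_inner_add_add_eq_zero hW v₁ v₂
  exact ⟨v₁ + w₁, v₂ + w₂, by simpa using hw₁, by simpa using hw₂, h⟩

theorem stmt8_general {V : Type*} [NormedAddCommGroup V] [InnerProductSpace ℝ V]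
    (W : Submodule ℝ V)
    (hW : W ≠ ⊥) :
    (∀ v₁ v₂ : V, ∃ w₁ ∈ W, ∃ w₂ ∈ W, (inner ℝ (v₁ + w₁) (v₂ + w₂) : ℝ) = 0) ∧
    (∀ U : Set (V ⧸ W), ∃ p : Submodule ℝ (V ⧸ W),
      (p : Set (V ⧸ W)) = {a | ∀ u ∈ U, qRelOrth W u a}) := by
  refine ⟨W.exists_inner_add_add_eq_zero hW, fun U => ⟨⊤, ?_⟩⟩
  ext a
  simp only [Submodule.top_coe, Set.mem_univ, Set.mem_ofPred_eq, true_iff]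
  exact fun u _ => qRelOrth_of_ne_bot hW u a

/-- For a real Hilbert space `V` with the orthogonality locality and a closed subspace
`W ≠ {0}`, the quotient locality on `V ⧸ W` is the full relation: any two vectors admit
representatives modulo `W` that are orthogonal. In particular `V ⧸ W` with the quotient
locality is a locality vector space. -/
theorem stmt8 {V : Type*} [NormedAddCommGroup V] [InnerProductSpace ℝ V]
    [CompleteSpace V] (W : Submodule ℝ V) (hclosed : IsClosed (W : Set V))
    (hW : W ≠ ⊥) :
    (∀ v₁ v₂ : V, ∃ w₁ ∈ W, ∃ w₂ ∈ W, (inner ℝ (v₁ + w₁) (v₂ + w₂) : ℝ) = 0) ∧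
    (∀ U : Set (V ⧸ W), ∃ p : Submodule ℝ (V ⧸ W),
      (p : Set (V ⧸ W)) = {a | ∀ u ∈ U, qRelOrth W u a}) :=
  stmt8_general W hW
end

section
/- Let V be the real vector space of all functions ℝ → ℝ with the disjoint-support relation f ⊤ g iff supp(f) ∩ supp(g) = ∅, and let W be the subspace of constant functions. Then the quotient V/W with the quotient locality is NOT a locality vector space: there exist u, v, w ∈ V with [u] ⊤̄ [v] and [u] ⊤̄ [w] but not [u] ⊤̄ [v+w]. -/
/-- The quotient (by the subspace of constant functions) of the disjoint-support locality
relation on functions `ℝ → ℝ`: two classes `[u], [v]` are related iff some representatives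
`u + c`, `v + d` (with `c, d` constants) have disjoint supports. -/
def qRelFun (u v : ℝ → ℝ) : Prop :=
  ∃ c d : ℝ, ∀ x : ℝ, u x + c = 0 ∨ v x + d = 0

/-- The quotient of the space of real-valued functions on `ℝ` (with the disjoint support
locality) by the subspace of constant functions is not a locality vector space: there are
`u, v, w` with `[u] ⊤̄ [v]` and `[u] ⊤̄ [w]` but not `[u] ⊤̄ [v + w]`. -/
theorem stmt9 :
    ∃ u v w : ℝ → ℝ, qRelFun u v ∧ qRelFun u w ∧ ¬ qRelFun u (v + w) := by
  refine ⟨fun x => if 1 < x then 1 else 0, fun x => if 0 < x then 1 else 0,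
    fun x => if 2 < x then 1 else 0, ⟨0, -1, fun x => ?_⟩, ⟨-1, 0, fun x => ?_⟩, ?_⟩
  · by_cases h : 1 < x
    · right; have : (0:ℝ) < x := by linarith
      simp [h, this]
    · left; simp [h]
  · by_cases h : 1 < x
    · left; simp [h]
    · right; have : ¬ (2:ℝ) < x := by linarith
      simp [this]
  · rintro ⟨c, d, h⟩
    have h0 := h 0
    have h1 := h (1/2)
    have h2 := h (3/2)
    have h3 := h 3
    norm_num [Pi.add_apply] at h0 h1 h2 h3
    rcases h0 with h0 | h0 <;> rcases h1 with h1 | h1 <;>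
      rcases h2 with h2 | h2 <;> rcases h3 with h3 | h3 <;> linarith
end

section
/- Let (V,⊤) be a locality vector space, W ⊆ V a subspace, and suppose W admits a strong locality complement W̃ (i.e., V = W ⊕ W̃ and the projection π onto W along W̃ satisfies: x ⊤ y implies π(x) ⊤ y). Then the following four conditions on the projections π (onto W) and π̃ (onto W̃) are equivalent: (1) π⊤π and π⊤π̃; (2) π ⊤ id_V; (3) π̃⊤π̃ and π⊤π̃; (4) π̃ ⊤ id_V. Here for linear maps f,g : V → V, 'f ⊤ g' means x ⊤ y implies f(x) ⊤ g(y). -/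
/-- For a locality vector space `(E, r)` with `E = W ⊕ W'` and associated projections
`π` (onto `W`) and `π'` (onto `W'`), the four conditions characterising a strong
locality complement are equivalent. Here `f ⊤ g` for linear maps means
`r x y → r (f x) (g y)`. -/
theorem stmt10 {K E : Type*} [Field K] [AddCommGroup E] [Module K E]
    (r : E → E → Prop) (hsymm : ∀ x y, r x y → r y x)
    (hloc : ∀ U : Set E, ∃ p : Submodule K E, (p : Set E) = {x | ∀ u ∈ U, r u x})
    (W W' : Submodule K E) (hcompl : IsCompl W W')
    (π π' : E →ₗ[K] E)
    (hπ : ∀ x, π x ∈ W) (hπ' : ∀ x, π' x ∈ W')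
    (hsum : ∀ x, π x + π' x = x) :
    List.TFAE
      [ (∀ x y, r x y → r (π x) (π y)) ∧ (∀ x y, r x y → r (π x) (π' y)),
        ∀ x y, r x y → r (π x) y,
        (∀ x y, r x y → r (π' x) (π' y)) ∧ (∀ x y, r x y → r (π x) (π' y)),
        ∀ x y, r x y → r (π' x) y ] := by
  have key : ∀ u a b : E, r u a → r u b → r u (a + b) ∧ r u (a - b) := by
    intro u a b ha hb
    obtain ⟨p, hp⟩ := hloc {u}
    have hmem : ∀ x, r u x ↔ x ∈ p := by
      intro x
      constructor
      · intro h
        show x ∈ (p : Set E)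
        rw [hp]
        intro v hv
        rw [Set.mem_singleton_iff] at hv
        subst hv; exact h
      · intro h
        have hx : x ∈ (p : Set E) := h
        rw [hp] at hx
        exact hx u rfl
    exact ⟨(hmem _).2 (p.add_mem ((hmem a).1 ha) ((hmem b).1 hb)),
      (hmem _).2 (p.sub_mem ((hmem a).1 ha) ((hmem b).1 hb))⟩
  have hπ'x : ∀ x, π' x = x - π x := fun x => eq_sub_of_add_eq' (hsum x)
  have hπx : ∀ x, π x = x - π' x := fun x => eq_sub_of_add_eq (hsum x)
  tfae_have 1 → 2 := by
    rintro ⟨h1, h2⟩ x y hxy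
    have := (key (π x) (π y) (π' y) (h1 x y hxy) (h2 x y hxy)).1
    rwa [hsum] at this
  tfae_have 2 → 4 := by
    intro h2 x y hxy
    have ha := h2 x y hxy
    have := (key y x (π x) (hsymm _ _ hxy) (hsymm _ _ ha)).2
    rw [← hπ'x] at this
    exact hsymm _ _ this
  tfae_have 4 → 2 := by
    intro h4 x y hxy
    have ha := h4 x y hxy
    have := (key y x (π' x) (hsymm _ _ hxy) (hsymm _ _ ha)).2
    rw [← hπx] at this
    exact hsymm _ _ this
  tfae_have 2 → 1 := by
    intro h2
    constructor
    · intro x y hxy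
      exact hsymm _ _ (h2 y (π x) (hsymm _ _ (h2 x y hxy)))
    · intro x y hxy
      have ha := h2 x y hxy
      have hb := hsymm _ _ (h2 y (π x) (hsymm _ _ ha))
      have := (key (π x) y (π y) ha hb).2
      rwa [← hπ'x] at this
  tfae_have 4 → 3 := by
    intro h4
    have h3a : ∀ x y, r x y → r (π' x) (π' y) := by
      intro x y hxy
      exact hsymm _ _ (h4 y (π' x) (hsymm _ _ (h4 x y hxy)))
    refine ⟨h3a, fun x y hxy => ?_⟩
    -- r x (π' y)
    have hx : r x (π' y) := hsymm _ _ (h4 y x (hsymm _ _ hxy))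
    have hb := h3a x y hxy
    have := (key (π' y) x (π' x) (hsymm _ _ hx) (hsymm _ _ hb)).2
    rw [← hπx] at this
    exact hsymm _ _ this
  tfae_have 3 → 4 := by
    rintro ⟨h3a, h3b⟩ x y hxy
    have ha := hsymm _ _ (h3b y x (hsymm _ _ hxy))   -- r (π' x) (π y)
    have hb := hsymm _ _ (h3a y x (hsymm _ _ hxy))   -- r (π' x) (π y')? check
    have := (key (π' x) (π y) (π' y) ha hb).1
    rwa [hsum] at this
  tfae_finish
end

section
/- Let (V,⊤) be a locality vector space and let W̃ be a strong locality complement of a subspace W (i.e., V = W ⊕ W̃ and the projection π̃ onto W̃ along W satisfies x ⊤ y ⟹ π̃(x) ⊤ y). Then W is locality compatible with ⊤: for all x, y, z ∈ V and w ∈ W, if x ⊤ y and (x+w) ⊤ z, then there exists w' ∈ W with (x+w') ⊤ y and (x+w') ⊤ z. -/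
/-- If a subspace `W` of a locality vector space `(E, r)` admits a strong locality
complement `W'` (with projection `π'` onto `W'` along `W` locally independent of the
identity), then `W` is locality compatible with `r`. -/
theorem stmt11 {K E : Type*} [Field K] [AddCommGroup E] [Module K E]
    (r : E → E → Prop) (hsymm : ∀ x y, r x y → r y x)
    (hloc : ∀ U : Set E, ∃ p : Submodule K E, (p : Set E) = {x | ∀ u ∈ U, r u x})
    (W W' : Submodule K E) (hcompl : IsCompl W W')
    (π' : E →ₗ[K] E) (hmem : ∀ x, π' x ∈ W') (hker : ∀ x, x - π' x ∈ W)
    (hind : ∀ x y, r x y → r (π' x) y) :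
    ∀ x y z : E, ∀ w ∈ W, r x y → r (x + w) z →
      ∃ w' ∈ W, r (x + w') y ∧ r (x + w') z := by
  intro x y z w hw hxy hxwz
  refine ⟨π' x - x, ?_, ?_, ?_⟩
  · have := hker x
    simpa using W.neg_mem this
  · simpa using hind x y hxy
  · have hπw : π' w = 0 := by
      have h1 : π' w ∈ W := by
        have := hker w
        have := W.sub_mem hw this
        simpa using this
      have : π' w ∈ W ⊓ W' := ⟨h1, hmem w⟩
      rwa [hcompl.inf_eq_bot, Submodule.mem_bot] at this
    have := hind (x + w) z hxwz
    rw [map_add, hπw, add_zero] at this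
    simpa using this
end

section
/- Let (V,⊤) be a locality vector space and W ⊆ V a subspace which is locality compatible with ⊤ (i.e., for all x,y,z ∈ V, w ∈ W: x ⊤ y and (x+w) ⊤ z imply there is w' ∈ W with (x+w') ⊤ y and (x+w') ⊤ z). Then the quotient V/W equipped with the quotient locality ⊤̄ ([u] ⊤̄ [v] iff some representatives are ⊤-related) is a locality vector space: for every subset U of V/W, the polar set U^⊤̄ is a linear subspace of V/W. -/
/-- If `(V, r)` is a locality vector space and `W` is a subspace locality compatible
with `r`, then the quotient `V ⧸ W` with the quotient locality is a locality vector
space: all polar sets are linear subspaces. -/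
theorem stmt12 {K V : Type*} [Field K] [AddCommGroup V] [Module K V]
    (r : V → V → Prop) (hsymm : ∀ x y, r x y → r y x) (h0 : r 0 0)
    (hloc : ∀ U : Set V, ∃ p : Submodule K V, (p : Set V) = {x | ∀ u ∈ U, r u x})
    (W : Submodule K V)
    (hcompat : ∀ x y z : V, ∀ w ∈ W, r x y → r (x + w) z →
      ∃ w' ∈ W, r (x + w') y ∧ r (x + w') z) :
    ∀ U : Set (V ⧸ W), ∃ p : Submodule K (V ⧸ W),
      (p : Set (V ⧸ W)) = {a | ∀ u ∈ U, qRel r W u a} := by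
  have key : ∀ u : V, ∃ p : Submodule K V, (p : Set V) = {x | r u x} := by
    intro u
    obtain ⟨p, hp⟩ := hloc {u}
    refine ⟨p, ?_⟩
    rw [hp]; ext x; simp
  have rzero : ∀ u : V, r u 0 := by
    intro u
    obtain ⟨p, hp⟩ := key u
    have : (0 : V) ∈ (p : Set V) := p.zero_mem
    rwa [hp] at this
  have radd : ∀ u x y : V, r u x → r u y → r u (x + y) := by
    intro u x y hx hy
    obtain ⟨p, hp⟩ := key u
    have hx' : x ∈ (p : Set V) := by rw [hp]; exact hx
    have hy' : y ∈ (p : Set V) := by rw [hp]; exact hy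
    have : x + y ∈ (p : Set V) := p.add_mem hx' hy'
    rwa [hp] at this
  have rsmul : ∀ (c : K) (u x : V), r u x → r u (c • x) := by
    intro c u x hx
    obtain ⟨p, hp⟩ := key u
    have hx' : x ∈ (p : Set V) := by rw [hp]; exact hx
    have : c • x ∈ (p : Set V) := p.smul_mem c hx'
    rwa [hp] at this
  intro U
  refine ⟨{ carrier := {a | ∀ u ∈ U, qRel r W u a},
            zero_mem' := ?_, add_mem' := ?_, smul_mem' := ?_ }, rfl⟩
  case refine_2 =>
    intro u hu
    obtain ⟨u', rfl⟩ := Submodule.Quotient.mk_surjective W u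
    exact ⟨u', 0, rfl, by simp, rzero u'⟩
  case refine_1 =>
    intro a b ha hb
    intro u hu
    obtain ⟨u1, v1, hu1, hv1, h1⟩ := ha u hu
    obtain ⟨u2, v2, hu2, hv2, h2⟩ := hb u hu
    have hw : u2 - u1 ∈ W := by
      rw [← Submodule.Quotient.eq]
      exact hu2.trans hu1.symm
    have h2' : r (u1 + (u2 - u1)) v2 := by
      have : u1 + (u2 - u1) = u2 := by abel
      rwa [this]
    obtain ⟨w', hw', h3, h4⟩ := hcompat u1 v1 v2 (u2 - u1) hw h1 h2'
    refine ⟨u1 + w', v1 + v2, ?_, ?_, radd _ _ _ h3 h4⟩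
    · rw [← hu1, Submodule.Quotient.eq]
      simpa using hw'
    · rw [← hv1, ← hv2, Submodule.Quotient.mk_add]
  case refine_3 =>
    intro c a ha u hu
    obtain ⟨u', v', hu', hv', h⟩ := ha u hu
    exact ⟨u', c • v', hu', by rw [← hv', Submodule.Quotient.mk_smul], rsmul c u' v' h⟩
end

section
/- Let V be a real Hilbert space with orthogonality as the locality relation, and let W be a closed subspace with {0} ⊊ W ⊊ V. Then W is NOT locality compatible with the orthogonality relation: there exist x, y, z ∈ V and w ∈ W with ⟨x,y⟩ = 0 and ⟨x+w, z⟩ = 0, but there is no w' ∈ W with ⟨x+w', y⟩ = 0 and ⟨x+w', z⟩ = 0 simultaneously. -/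
open scoped RealInnerProductSpace

/-!
Take nonzero `w ∈ W` and `x ∈ Wᗮ`, and put `y = w`, `z = ‖x‖² w - ‖w‖² x`. Then `x ⊥ y` and
`x + w ⊥ z`. But for every `w' ∈ W` the vector `x + w'` has inner product `⟪x, x⟫ = ‖x‖²` with `x`,
so `‖x‖² ⟪x + w', y⟫ - ⟪x + w', z⟫ = ‖w‖² ‖x‖² ≠ 0`: it cannot be orthogonal to both `y` and `z`.
-/

section

variable {V : Type*} [NormedAddCommGroup V] [InnerProductSpace ℝ V]

def Submodule.IsOrthLocalityCompatible (W : Submodule ℝ V) : Prop :=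
  ∀ x y z : V, ∀ w ∈ W, ⟪x, y⟫ = 0 → ⟪x + w, z⟫ = 0 →
    ∃ w' ∈ W, ⟪x + w', y⟫ = 0 ∧ ⟪x + w', z⟫ = 0

namespace Submodule

theorem exists_mem_orthogonal_ne_zero (W : Submodule ℝ V) [W.HasOrthogonalProjection]
    (htop : W ≠ ⊤) : ∃ x ∈ Wᗮ, x ≠ 0 :=
  exists_mem_ne_zero_of_ne_bot (by rwa [ne_eq, orthogonal_eq_bot_iff])

theorem inner_add_mem_orthogonal_self {W : Submodule ℝ V} {x w' : V} (hx : x ∈ Wᗮ)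
    (hw' : w' ∈ W) : ⟪x + w', x⟫ = ‖x‖ ^ 2 := by
  rw [inner_add_left, real_inner_self_eq_norm_sq, hx w' hw', add_zero]

theorem not_isOrthLocalityCompatible_of_mem {W : Submodule ℝ V} {x w : V} (hx : x ∈ Wᗮ)
    (hx0 : x ≠ 0) (hw : w ∈ W) (hw0 : w ≠ 0) :
    ⟪x, w⟫ = 0 ∧ ⟪x + w, ‖x‖ ^ 2 • w - ‖w‖ ^ 2 • x⟫ = 0 ∧
      ¬ ∃ w' ∈ W, ⟪x + w', w⟫ = 0 ∧ ⟪x + w', ‖x‖ ^ 2 • w - ‖w‖ ^ 2 • x⟫ = 0 := by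
  have hxw : ⟪x, w⟫ = 0 := inner_eq_zero_symm.mp (hx w hw)
  refine ⟨hxw, ?_, ?_⟩
  · rw [inner_sub_right, inner_smul_right, inner_smul_right, inner_add_mem_orthogonal_self hx hw,
      inner_add_left, hxw, real_inner_self_eq_norm_sq]
    ring
  · rintro ⟨w', hw', hy, hz⟩
    rw [inner_sub_right, inner_smul_right, inner_smul_right, hy,
      inner_add_mem_orthogonal_self hx hw'] at hz
    have : ‖w‖ ^ 2 * ‖x‖ ^ 2 ≠ 0 := by positivity
    exact this (by linarith)

theorem not_isOrthLocalityCompatible (W : Submodule ℝ V) [W.HasOrthogonalProjection]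
    (hbot : W ≠ ⊥) (htop : W ≠ ⊤) : ¬ W.IsOrthLocalityCompatible := by
  obtain ⟨w, hw, hw0⟩ := exists_mem_ne_zero_of_ne_bot hbot
  obtain ⟨x, hx, hx0⟩ := W.exists_mem_orthogonal_ne_zero htop
  obtain ⟨hxy, hxz, hnot⟩ := not_isOrthLocalityCompatible_of_mem hx hx0 hw hw0
  exact fun hW => hnot (hW _ _ _ w hw hxy hxz)

end Submodule

end

/-- A closed subspace `{0} ⊊ W ⊊ V` of a real Hilbert space is not locality compatible
with the orthogonality relation. -/
theorem stmt13 {V : Type*} [NormedAddCommGroup V] [InnerProductSpace ℝ V]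
    [CompleteSpace V] (W : Submodule ℝ V) (hclosed : IsClosed (W : Set V))
    (hbot : W ≠ ⊥) (htop : W ≠ ⊤) :
    ∃ x y z : V, ∃ w ∈ W, (inner ℝ x y : ℝ) = 0 ∧ (inner ℝ (x + w) z : ℝ) = 0 ∧
      ¬ ∃ w' ∈ W, (inner ℝ (x + w') y : ℝ) = 0 ∧ (inner ℝ (x + w') z : ℝ) = 0 := by
  have : CompleteSpace W := hclosed.completeSpace_coe
  by_contra h
  refine W.not_isOrthLocalityCompatible hbot htop fun x y z w hw hxy hxz => ?_
  by_contra hno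
  exact h ⟨x, y, z, w, hw, hxy, hxz, hno⟩
end

section
/- Let f₁ : V₁ → W₁ and f₂ : V₂ → W₂ be linear maps between vector spaces over a field K. Then the kernel of f₁ ⊗ f₂ : V₁ ⊗ V₂ → W₁ ⊗ W₂ equals ker(f₁) ⊗ V₂ + V₁ ⊗ ker(f₂) (as subspaces of V₁ ⊗ V₂, where ker(f₁) ⊗ V₂ denotes the image of the canonical map ker(f₁) ⊗ V₂ → V₁ ⊗ V₂). -/
open scoped TensorProduct

/-- The kernel of `f₁ ⊗ f₂` equals `ker f₁ ⊗ V₂ + V₁ ⊗ ker f₂` (where the summands are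
the images in `V₁ ⊗ V₂` of the canonical maps). -/
theorem stmt14 {K V₁ V₂ W₁ W₂ : Type*} [Field K]
    [AddCommGroup V₁] [Module K V₁] [AddCommGroup V₂] [Module K V₂]
    [AddCommGroup W₁] [Module K W₁] [AddCommGroup W₂] [Module K W₂]
    (f₁ : V₁ →ₗ[K] W₁) (f₂ : V₂ →ₗ[K] W₂) :
    LinearMap.ker (TensorProduct.map f₁ f₂) =
      LinearMap.range (TensorProduct.map (LinearMap.ker f₁).subtype
        (LinearMap.id : V₂ →ₗ[K] V₂)) ⊔
      LinearMap.range (TensorProduct.map (LinearMap.id : V₁ →ₗ[K] V₁)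
        (LinearMap.ker f₂).subtype) := by
  -- factor fᵢ through its range
  have hfac : TensorProduct.map f₁ f₂ =
      (TensorProduct.map (LinearMap.range f₁).subtype (LinearMap.range f₂).subtype).comp
        (TensorProduct.map f₁.rangeRestrict f₂.rangeRestrict) := by
    rw [← TensorProduct.map_comp]
    congr 1 <;> ext x <;> rfl
  have hinj : Function.Injective
      (TensorProduct.map (LinearMap.range f₁).subtype (LinearMap.range f₂).subtype) := by
    rw [← LinearMap.lTensor_comp_rTensor]
    exact (Module.Flat.lTensor_preserves_injective_linearMap _
        (LinearMap.range f₂).injective_subtype).comp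
      (Module.Flat.rTensor_preserves_injective_linearMap _
        (LinearMap.range f₁).injective_subtype)
  have hker : LinearMap.ker (TensorProduct.map f₁ f₂) =
      LinearMap.ker (TensorProduct.map f₁.rangeRestrict f₂.rangeRestrict) := by
    rw [hfac, LinearMap.ker_comp, (LinearMap.ker_eq_bot.mpr hinj), Submodule.comap_bot]
  have e₁ : Function.Exact (LinearMap.ker f₁).subtype f₁.rangeRestrict := by
    rw [LinearMap.exact_iff, LinearMap.ker_rangeRestrict, Submodule.range_subtype]
  have e₂ : Function.Exact (LinearMap.ker f₂).subtype f₂.rangeRestrict := by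
    rw [LinearMap.exact_iff, LinearMap.ker_rangeRestrict, Submodule.range_subtype]
  rw [hker, TensorProduct.map_ker e₁ f₁.surjective_rangeRestrict e₂
    f₂.surjective_rangeRestrict, sup_comm]
  congr 1
end

section
/- Let H be a filtered connected bialgebra over a field (H = ⋃_n H^n with H^0 = K·1, Δ(H^n) ⊆ Σ_{p+q=n} H^p ⊗ H^q), and let J ≠ {0} be a left coideal (Δ(J) ⊆ J ⊗ H and ε(J) = 0) with J ∩ H^0 = {0}. Then J contains a nonzero primitive element of H. -/
open scoped TensorProduct

/-!
Take `x ∈ J` nonzero of minimal filtration degree `n + 1` and put `r = Δx - x ⊗ 1 - 1 ⊗ x`.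
With `π = id - ε(·) 1`, the counit axioms give `r = (π ⊗ id) Δx - x ⊗ 1 = (id ⊗ π) Δx - 1 ⊗ x`.
Since `π` fixes `J`, the first form puts `r` in `J ⊗ H`; since `π` kills `F 0 = K 1`, the second
puts `r` in `F n ⊗ H`. As `J ⊓ F n = 0`, the map `J → H ⧸ F n` is injective and stays so after
tensoring with `H` over a field; it kills `r`, hence `r = 0`.
-/

open LinearMap (range rTensor lTensor)

section TensorSubmodule

variable {R V W : Type*} [CommRing R] [AddCommGroup V] [Module R V] [AddCommGroup W] [Module R W]

theorem Submodule.span_tmul_eq_range_rTensor_subtype (A : Submodule R V) :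
    Submodule.span R {z : V ⊗[R] W | ∃ a ∈ A, ∃ b : W, z = a ⊗ₜ[R] b} =
      range (A.subtype.rTensor W) := by
  rw [LinearMap.range_eq_map, ← TensorProduct.span_tmul_eq_top, Submodule.map_span]
  congr 1
  ext z
  simp [eq_comm]

theorem Submodule.disjoint_range_rTensor_subtype [Module.Flat R W] {A B : Submodule R V}
    (h : Disjoint A B) :
    Disjoint (range (A.subtype.rTensor W)) (range (B.subtype.rTensor W)) := by
  rw [Submodule.disjoint_def]
  rintro _ ⟨s, rfl⟩ ⟨s', hs'⟩
  have hinj : Function.Injective (B.mkQ ∘ₗ A.subtype) := by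
    rwa [← LinearMap.ker_eq_bot, LinearMap.ker_comp, Submodule.ker_mkQ,
      ← Submodule.disjoint_iff_comap_eq_bot]
  suffices rTensor W (B.mkQ ∘ₗ A.subtype) s = 0 by
    rw [(Module.Flat.rTensor_preserves_injective_linearMap _ hinj).eq_iff' (map_zero _)] at this
    simp [this]
  have hBB : B.mkQ ∘ₗ B.subtype = 0 := by ext; simp
  rw [LinearMap.rTensor_comp_apply, ← hs', ← LinearMap.rTensor_comp_apply, hBB,
    LinearMap.rTensor_zero, LinearMap.zero_apply]

end TensorSubmodule

theorem Submodule.exists_disjoint_and_not_disjoint_succ {R M : Type*} [Semiring R]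
    [AddCommMonoid M] [Module R M] {F : ℕ → Submodule R M} (hmono : Monotone F)
    (hunion : ⨆ n, F n = ⊤) {J : Submodule R M} (hJ : J ≠ ⊥) (h0 : Disjoint J (F 0)) :
    ∃ n, Disjoint J (F n) ∧ ¬ Disjoint J (F (n + 1)) := by
  obtain ⟨x, hxJ, hx⟩ := Submodule.exists_mem_ne_zero_of_ne_bot hJ
  obtain ⟨m, hm⟩ := (Submodule.mem_iSup_of_directed F hmono.directed_le).1
    (hunion ▸ Submodule.mem_top : x ∈ ⨆ n, F n)
  by_contra! hstep
  have hm_disj : Disjoint J (F m) := Nat.rec (motive := fun n ↦ Disjoint J (F n)) h0 hstep m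
  exact hx (Submodule.disjoint_def.1 hm_disj x hxJ hm)

namespace Bialgebra

variable (K : Type*) {H : Type*} [CommRing K] [Ring H] [Bialgebra K H]

noncomputable def augmentationProj : H →ₗ[K] H :=
  LinearMap.id - Algebra.linearMap K H ∘ₗ Coalgebra.counit

noncomputable def reducedComul (x : H) : H ⊗[K] H :=
  Coalgebra.comul x - x ⊗ₜ[K] 1 - 1 ⊗ₜ[K] x

variable {K}

@[simp]
theorem augmentationProj_apply (x : H) :
    augmentationProj K x = x - Coalgebra.counit (R := K) x • 1 := by
  simp [augmentationProj, Algebra.algebraMap_eq_smul_one]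

theorem augmentationProj_eq_zero_of_mem_one {x : H} (hx : x ∈ (1 : Submodule K H)) :
    augmentationProj K x = 0 := by
  obtain ⟨c, rfl⟩ := Submodule.mem_one.1 hx
  simp [Algebra.algebraMap_eq_smul_one, Bialgebra.counit_one]

theorem reducedComul_eq_rTensor_augmentationProj (x : H) :
    reducedComul K x = rTensor H (augmentationProj K) (Coalgebra.comul x) - x ⊗ₜ[K] 1 := by
  rw [augmentationProj, LinearMap.rTensor_sub, LinearMap.rTensor_comp, LinearMap.sub_apply,
    LinearMap.comp_apply, Coalgebra.rTensor_counit_comul]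
  simp [reducedComul, sub_right_comm]

theorem reducedComul_eq_lTensor_augmentationProj (x : H) :
    reducedComul K x = lTensor H (augmentationProj K) (Coalgebra.comul x) - 1 ⊗ₜ[K] x := by
  rw [augmentationProj, LinearMap.lTensor_sub, LinearMap.lTensor_comp, LinearMap.sub_apply,
    LinearMap.comp_apply, Coalgebra.lTensor_counit_comul]
  simp [reducedComul]

theorem reducedComul_mem_range_of_leftCoideal {J : Submodule K H}
    (hcounit : ∀ a ∈ J, Coalgebra.counit (R := K) a = 0) {x : H} (hx : x ∈ J)
    (hcomul : Coalgebra.comul (R := K) x ∈ range (J.subtype.rTensor H)) :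
    reducedComul K x ∈ range (J.subtype.rTensor H) := by
  rw [reducedComul_eq_rTensor_augmentationProj]
  refine sub_mem ?_ ⟨⟨x, hx⟩ ⊗ₜ 1, rfl⟩
  obtain ⟨s, hs⟩ := hcomul
  have hfix : augmentationProj K ∘ₗ J.subtype = J.subtype := by
    ext a
    simp [hcounit a a.2]
  exact ⟨s, by rw [← hs, ← LinearMap.rTensor_comp_apply, hfix]⟩

theorem reducedComul_mem_range_of_filtration {F : ℕ → Submodule K H} (hmono : Monotone F)
    (hconn : F 0 = 1) (n : ℕ) {x : H}
    (hcomul : Coalgebra.comul (R := K) x ∈ ⨆ (p : ℕ) (q : ℕ) (_ : p + q = n + 1),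
      Submodule.span K {z : H ⊗[K] H | ∃ a ∈ F p, ∃ b ∈ F q, z = a ⊗ₜ[K] b}) :
    reducedComul K x ∈ range ((F n).subtype.rTensor H) := by
  have hone : (1 : H) ∈ F n := hmono n.zero_le (hconn ▸ Submodule.mem_one.2 ⟨1, map_one _⟩)
  rw [reducedComul_eq_lTensor_augmentationProj]
  refine sub_mem ?_ ⟨⟨1, hone⟩ ⊗ₜ x, rfl⟩
  suffices h : (⨆ (p : ℕ) (q : ℕ) (_ : p + q = n + 1),
      Submodule.span K {z : H ⊗[K] H | ∃ a ∈ F p, ∃ b ∈ F q, z = a ⊗ₜ[K] b}) ≤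
      (range ((F n).subtype.rTensor H)).comap (lTensor H (augmentationProj K)) from h hcomul
  refine iSup_le fun p ↦ iSup_le fun q ↦ iSup_le fun hpq ↦ Submodule.span_le.2 ?_
  rintro _ ⟨a, ha, b, hb, rfl⟩
  rcases q with _ | q
  · simp [augmentationProj_eq_zero_of_mem_one (hconn ▸ hb : b ∈ (1 : Submodule K H))]
  · exact ⟨⟨a, hmono (by omega) ha⟩ ⊗ₜ augmentationProj K b, rfl⟩

end Bialgebra

open Bialgebra in
/-- A nonzero left coideal `J` of a filtered connected bialgebra which meets `H^0`
trivially contains a nonzero primitive element. -/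
theorem stmt18 {K H : Type*} [Field K] [Ring H] [Bialgebra K H]
    (F : ℕ → Submodule K H) (hmono : Monotone F) (hunion : (⨆ n, F n) = ⊤)
    (hconn : F 0 = 1)
    (hcomulF : ∀ n : ℕ, ∀ x ∈ F n, Coalgebra.comul (R := K) x ∈
      ⨆ (p : ℕ) (q : ℕ) (_ : p + q = n),
        Submodule.span K {z : H ⊗[K] H | ∃ a ∈ F p, ∃ b ∈ F q, z = a ⊗ₜ[K] b})
    (J : Submodule K H) (hJ : J ≠ ⊥)
    (hcoideal : ∀ x ∈ J, Coalgebra.comul (R := K) x ∈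
      Submodule.span K {z : H ⊗[K] H | ∃ a ∈ J, ∃ b : H, z = a ⊗ₜ[K] b})
    (hcounit : ∀ x ∈ J, Coalgebra.counit (R := K) x = 0)
    (hJ0 : J ⊓ F 0 = ⊥) :
    ∃ x ∈ J, x ≠ 0 ∧
      Coalgebra.comul (R := K) x = x ⊗ₜ[K] (1 : H) + (1 : H) ⊗ₜ[K] x := by
  obtain ⟨n, hdisj, hnext⟩ :=
    Submodule.exists_disjoint_and_not_disjoint_succ hmono hunion hJ (disjoint_iff.2 hJ0)
  obtain ⟨x, hxJ, hxF, hx0⟩ : ∃ x ∈ J, x ∈ F (n + 1) ∧ x ≠ 0 := by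
    simpa [Submodule.disjoint_def] using hnext
  have hJpart : reducedComul K x ∈ range (J.subtype.rTensor H) :=
    reducedComul_mem_range_of_leftCoideal hcounit hxJ
      (J.span_tmul_eq_range_rTensor_subtype (W := H) ▸ hcoideal x hxJ)
  have hFpart : reducedComul K x ∈ range ((F n).subtype.rTensor H) :=
    reducedComul_mem_range_of_filtration hmono hconn n (hcomulF _ x hxF)
  have hprim : reducedComul K x = 0 :=
    Submodule.disjoint_def.1 (Submodule.disjoint_range_rTensor_subtype hdisj) _ hJpart hFpart
  refine ⟨x, hxJ, hx0, ?_⟩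
  rwa [reducedComul, sub_sub, sub_eq_zero] at hprim
end
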